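/- Let p > 3 be a prime and let n, k be such that p^{k-2} < n ≤ p^{k-1}, p^{k-1} - n ∈ S_p(0), and p^{k-1} - n < (p-2)p^{k-2}. Define A = ({0} ∪ (n + S_p^k)) \ {(p-1)p^{k-1}}. Then A is p-free mod p^k: there is no p-term arithmetic progression modulo p^k with nonzero common difference contained in A. -/

import Mathlib

open scoped Classical

/-- A set of naturals is `p`-free if it contains no `p`-term arithmetic
progression with positive common difference. -/
def IsPFree (p : ℕ) (A : Set ℕ) : Prop :=
  ¬ ∃ a d : ℕ, 0 < d ∧ ∀ i < p, a + i * d ∈ A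

/-- `A` `p`-covers `x`: there are `x₁ < x₂ < ⋯ < x_{p-1}` in `A` such that
`x₁, …, x_{p-1}, x` is an arithmetic progression. -/
def PCovers (p : ℕ) (A : Set ℕ) (x : ℕ) : Prop :=
  ∃ a d : ℕ, 0 < d ∧ (∀ i < p - 1, a + i * d ∈ A) ∧ a + (p - 1) * d = x

/-- The set of naturals `≤ n` accepted by the greedy algorithm generating the
`p`-Stanley sequence of `A`: an integer is accepted if it belongs to `A`, or if
it exceeds every element of `A` and adjoining it to the previously accepted
integers keeps the set `p`-free. -/
noncomputable def stanleyUpTo (p : ℕ) (A : Set ℕ) : ℕ → Set ℕ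
  | 0 => if 0 ∈ A ∨ ((∀ a ∈ A, a < 0) ∧ IsPFree p {0}) then {0} else ∅
  | n + 1 =>
      if n + 1 ∈ A ∨ ((∀ a ∈ A, a < n + 1) ∧
          IsPFree p (insert (n + 1) (stanleyUpTo p A n))) then
        insert (n + 1) (stanleyUpTo p A n)
      else stanleyUpTo p A n

/-- The `p`-Stanley sequence generated by `A`, as a set of naturals. -/
def StanleySeq (p : ℕ) (A : Set ℕ) : Set ℕ := {x | x ∈ stanleyUpTo p A x}

/-- `A ⊆ {0, 1, …, N-1}` `p`-covers `x` mod `N`: there are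
`x₁ < x₂ < ⋯ < x_{p-1}` in `A` such that `x₁, …, x_{p-1}, x` or
`x₁, …, x_{p-1}, x + N` is an arithmetic progression. -/
def PCoversMod (p N : ℕ) (A : Set ℕ) (x : ℕ) : Prop :=
  ∃ a d : ℕ, 0 < d ∧ (∀ i < p - 1, a + i * d ∈ A) ∧
    (a + (p - 1) * d = x ∨ a + (p - 1) * d = x + N)

/-- `A` is `p`-free mod `N`: `A` contains no `p`-term arithmetic progression
modulo `N` with nonzero common difference. -/
def IsPFreeMod (p N : ℕ) (A : Set ℕ) : Prop :=
  ¬ ∃ a d : ZMod N, d ≠ 0 ∧ ∀ i : ℕ, i < p → ∃ x ∈ A, (x : ZMod N) = a + (i : ZMod N) * d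

/-- `A ⊆ {0, 1, …, N-1}` is a modular `p`-free set mod `N`: it contains `0`,
is `p`-free mod `N`, and `p`-covers mod `N` every `x` with `0 ≤ x < N`, `x ∉ A`. -/
def IsModularPFree (p N : ℕ) (A : Set ℕ) : Prop :=
  A ⊆ Set.Iio N ∧ 0 ∈ A ∧ IsPFreeMod p N A ∧
    ∀ x < N, x ∉ A → PCoversMod p N A x

/-- `x` has no base-`p` digit equal to `p-1`. -/
def NoDig (p x : ℕ) : Prop := ∀ j, x / p ^ j % p ≠ p - 1

lemma noDig_zero {p : ℕ} (hp : 2 ≤ p) : NoDig p 0 := by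
  intro j; simp [Nat.zero_div]; omega

lemma digit_mod_pow {p x j k : ℕ} (h : j < k) :
    (x % p ^ k) / p ^ j % p = x / p ^ j % p := by
  have hk : p ^ k = p ^ j * p ^ (k - j) := by rw [← pow_add]; congr 1; omega
  rw [hk, Nat.mod_mul_right_div_self, Nat.mod_mod_of_dvd]
  exact dvd_pow_self p (by omega)

/-- Key digit lemma: if `¬ p ∣ e`, then for any target `t < p` some term of the
AP `a + i * (p^j * e)` has `j`-th digit `t`. -/
lemma exists_digit (p : ℕ) (hp : p.Prime) (a e j t : ℕ) (he : ¬ p ∣ e) (ht : t < p) :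
    ∃ i < p, (a + i * (p ^ j * e)) / p ^ j % p = t := by
  haveI := Fact.mk hp
  have hpj : 0 < p ^ j := pow_pos hp.pos j
  have hq : ∀ i : ℕ, (a + i * (p ^ j * e)) / p ^ j = a / p ^ j + i * e := by
    intro i
    rw [show i * (p ^ j * e) = i * e * p ^ j by ring, Nat.add_mul_div_right _ _ hpj]
  have hu : (e : ZMod p) ≠ 0 := by
    simpa [ZMod.natCast_eq_zero_iff] using he
  set z : ZMod p := ((t : ZMod p) - (a / p ^ j : ℕ)) * (e : ZMod p)⁻¹ with hz
  refine ⟨z.val, ZMod.val_lt z, ?_⟩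
  rw [hq]
  have : ((a / p ^ j + z.val * e : ℕ) : ZMod p) = (t : ZMod p) := by
    push_cast
    rw [ZMod.natCast_val, ZMod.cast_id]
    rw [hz, mul_assoc, inv_mul_cancel₀ hu]; ring
  have := (ZMod.natCast_eq_natCast_iff _ _ _).mp this
  unfold Nat.ModEq at this
  rwa [Nat.mod_eq_of_lt ht] at this

lemma exists_digit' (p : ℕ) (hp : p.Prime) (a d t : ℕ) (hd : 0 < d) (ht : t < p) :
    ∃ i < p, (a + i * d) / p ^ (d.factorization p) % p = t := by
  have h1 : p ^ (d.factorization p) * (d / p ^ d.factorization p) = d :=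
    Nat.ordProj_mul_ordCompl_eq_self d p
  have h2 : ¬ p ∣ d / p ^ d.factorization p := Nat.not_dvd_ordCompl hp hd.ne'
  obtain ⟨i, hip, hi⟩ := exists_digit p hp a (d / p ^ d.factorization p)
    (d.factorization p) t h2 ht
  exact ⟨i, hip, by rwa [h1] at hi⟩

/-- Any set all of whose elements avoid the digit `p-1` is `p`-free. -/
lemma isPFree_of_noDig {p : ℕ} (hp : p.Prime) {A : Set ℕ} (hA : ∀ x ∈ A, NoDig p x) :
    IsPFree p A := by
  rintro ⟨a, d, hd, h⟩
  obtain ⟨i, hip, hi⟩ := exists_digit' p hp a d (p - 1) hd (by have := hp.two_le; omega)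
  exact hA _ (h i hip) _ hi


lemma digit_sum {p : ℕ} (hp : 2 ≤ p) (L : ℕ) :
    ∀ (c : ℕ → ℕ), (∀ j, c j < p) → ∀ m < L,
      (∑ j ∈ Finset.range L, c j * p ^ j) / p ^ m % p = c m := by
  induction L with
  | zero => omega
  | succ L ih =>
    intro c hc m hm
    have key : ∑ j ∈ Finset.range (L + 1), c j * p ^ j
        = c 0 + p * ∑ j ∈ Finset.range L, c (j + 1) * p ^ j := by
      rw [Finset.sum_range_succ', Finset.mul_sum]
      simp only [pow_zero, mul_one, pow_succ]
      rw [add_comm]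
      congr 1
      exact Finset.sum_congr rfl fun j _ => by ring
    rw [key]
    cases m with
    | zero =>
      simpa [Nat.add_mul_mod_self_left] using Nat.mod_eq_of_lt (hc 0)
    | succ m =>
      have h1 : (c 0 + p * ∑ j ∈ Finset.range L, c (j + 1) * p ^ j) / p ^ (m + 1)
          = (∑ j ∈ Finset.range L, c (j + 1) * p ^ j) / p ^ m := by
        rw [pow_succ', ← Nat.div_div_eq_div_mul]
        congr 1
        rw [mul_comm p, Nat.add_mul_div_right _ _ (by omega : 0 < p),
          Nat.div_eq_of_lt (hc 0), zero_add]
      rw [h1]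
      exact ih (fun j => c (j + 1)) (fun j => hc (j + 1)) m (by omega)

lemma sum_digit_lt {p : ℕ} (hp : 2 ≤ p) (L : ℕ) (c : ℕ → ℕ) (hc : ∀ j, c j < p) :
    (∑ j ∈ Finset.range L, c j * p ^ j) < p ^ L := by
  induction L with
  | zero => simp [Nat.mod_one]
  | succ L ih =>
    rw [Finset.sum_range_succ, pow_succ]
    have := hc L
    have h2 : c L * p ^ L ≤ (p - 1) * p ^ L := Nat.mul_le_mul_right _ (by omega)
    have h3 : 0 < p ^ L := pow_pos (by omega) L
    nlinarith

lemma sum_digits_self {p : ℕ} (L x : ℕ) :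
    ∑ j ∈ Finset.range L, (x / p ^ j % p) * p ^ j = x % p ^ L := by
  induction L with
  | zero => simp [Nat.mod_one]
  | succ L ih =>
    rw [Finset.sum_range_succ, ih, pow_succ, Nat.mod_mul]
    ring

lemma covers_of_not_noDig {p : ℕ} (hp : p.Prime) (x : ℕ) (hx : ¬ NoDig p x) :
    ∃ a d : ℕ, 0 < d ∧ (∀ i < p - 1, NoDig p (a + i * d) ∧ a + i * d < x) ∧
      a + (p - 1) * d = x := by
  have hp2 := hp.two_le
  set L := x + 1 with hL
  have hxL : x < p ^ L := lt_of_lt_of_le (Nat.lt_pow_self hp.one_lt : x < p ^ x)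
    (Nat.pow_le_pow_right hp.pos (by omega))
  set c : ℕ → ℕ := fun j => x / p ^ j % p with hc
  have hclt : ∀ j, c j < p := fun j => Nat.mod_lt _ hp.pos
  set a := ∑ j ∈ Finset.range L, (if c j = p - 1 then 0 else c j) * p ^ j with ha
  set d := ∑ j ∈ Finset.range L, (if c j = p - 1 then 1 else 0) * p ^ j with hd
  -- combination
  have hcomb : ∀ i : ℕ, a + i * d
      = ∑ j ∈ Finset.range L, (if c j = p - 1 then i else c j) * p ^ j := by
    intro i
    rw [ha, hd, Finset.mul_sum, ← Finset.sum_add_distrib]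
    refine Finset.sum_congr rfl fun j _ => ?_
    split_ifs <;> ring
  have hcoef : ∀ i : ℕ, i < p → ∀ j, (if c j = p - 1 then i else c j) < p := by
    intro i hi j; split_ifs <;> [exact hi; exact hclt j]
  have hdig : ∀ i, i < p → ∀ m, (a + i * d) / p ^ m % p
      = if m < L then (if c m = p - 1 then i else c m) else 0 := by
    intro i hi m
    rw [hcomb i]
    by_cases hm : m < L
    · rw [if_pos hm]
      exact digit_sum hp2 L _ (hcoef i hi) m hm
    · rw [if_neg hm]
      have hlt : (∑ j ∈ Finset.range L, (if c j = p - 1 then i else c j) * p ^ j) < p ^ m :=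
        lt_of_lt_of_le (sum_digit_lt hp2 L _ (hcoef i hi))
          (Nat.pow_le_pow_right hp.pos (by omega))
      rw [Nat.div_eq_of_lt hlt]
      simp
  -- d is positive
  obtain ⟨j₀, hj₀⟩ : ∃ j, c j = p - 1 := by
    by_contra h; push_neg at h; exact hx h
  have hj₀L : j₀ ∈ Finset.range L := by
    have h1 : p ^ j₀ ≤ x := by
      by_contra h; push_neg at h
      rw [hc] at hj₀; simp only at hj₀
      rw [Nat.div_eq_of_lt h] at hj₀; simp at hj₀; omega
    have h2 : j₀ < p ^ j₀ := Nat.lt_pow_self hp.one_lt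
    exact Finset.mem_range.mpr (by omega)
  have hdpos : 0 < d := by
    have : (if c j₀ = p - 1 then 1 else 0) * p ^ j₀ ≤ d :=
      Finset.single_le_sum (f := fun j => (if c j = p - 1 then 1 else 0) * p ^ j)
        (fun j _ => Nat.zero_le _) hj₀L
    rw [if_pos hj₀, one_mul] at this
    exact lt_of_lt_of_le (pow_pos hp.pos j₀) this
  -- last term equals x
  have hlast : a + (p - 1) * d = x := by
    rw [hcomb]
    have : ∀ j ∈ Finset.range L, (if c j = p - 1 then p - 1 else c j) * p ^ j
        = c j * p ^ j := fun j _ => by split_ifs with h <;> simp [h]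
    rw [Finset.sum_congr rfl this]
    have hs := sum_digits_self (p := p) L x
    rw [Nat.mod_eq_of_lt hxL] at hs
    simp only [hc]
    exact hs
  refine ⟨a, d, hdpos, fun i hi => ⟨?_, ?_⟩, hlast⟩
  · intro m
    rw [hdig i (by omega) m]
    split_ifs with h1 h2 <;> omega
  · have h1 : i * d < (p - 1) * d := Nat.mul_lt_mul_of_pos_right hi hdpos
    omega


lemma stanleyUpTo_char {p : ℕ} (hp : p.Prime) (m : ℕ) :
    stanleyUpTo p {0} m = {y | NoDig p y ∧ y ≤ m} := by
  have hp2 := hp.two_le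
  induction m with
  | zero =>
    have c0 : (0 : ℕ) ∈ ({0} : Set ℕ) ∨ ((∀ a ∈ ({0} : Set ℕ), a < 0) ∧ IsPFree p {0}) :=
      Or.inl rfl
    rw [stanleyUpTo, if_pos c0]
    ext y
    simp only [Set.mem_singleton_iff, Set.mem_setOf_eq, Nat.le_zero]
    exact ⟨fun h => ⟨h ▸ noDig_zero hp2, h⟩, fun h => h.2⟩
  | succ m ih =>
    rw [stanleyUpTo]
    by_cases h : NoDig p (m + 1)
    · rw [if_pos (show (m + 1 : ℕ) ∈ ({0} : Set ℕ) ∨ ((∀ a ∈ ({0} : Set ℕ), a < m + 1) ∧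
          IsPFree p (insert (m + 1) (stanleyUpTo p {0} m))) from Or.inr ⟨fun a ha => by simp only [Set.mem_singleton_iff] at ha; omega, by
        rw [ih]
        exact isPFree_of_noDig hp fun x hx => by
          rcases hx with hx | hx
          · exact hx ▸ h
          · exact hx.1⟩), ih]
      ext y
      simp only [Set.mem_insert_iff, Set.mem_setOf_eq]
      constructor
      · rintro (rfl | ⟨h1, h2⟩)
        · exact ⟨h, le_refl _⟩
        · exact ⟨h1, by omega⟩
      · rintro ⟨h1, h2⟩
        rcases Nat.lt_or_ge y (m + 1) with h3 | h3
        · exact Or.inr ⟨h1, by omega⟩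
        · exact Or.inl (by omega)
    · have hcond : ¬ ((m + 1 : ℕ) ∈ ({0} : Set ℕ) ∨ ((∀ a ∈ ({0} : Set ℕ), a < m + 1) ∧
          IsPFree p (insert (m + 1) (stanleyUpTo p {0} m)))) := by
        rintro (h0 | ⟨-, hfree⟩)
        · simp only [Set.mem_singleton_iff] at h0; omega
        · obtain ⟨a, d, hd, hmem, hlast⟩ := covers_of_not_noDig hp (m + 1) h
          refine hfree ⟨a, d, hd, fun i hi => ?_⟩
          rcases Nat.lt_or_ge i (p - 1) with hi' | hi'
          · refine Or.inr ?_
            rw [ih]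
            exact ⟨(hmem i hi').1, by have := (hmem i hi').2; omega⟩
          · have : i = p - 1 := by omega
            subst this
            rw [hlast]
            exact Or.inl rfl
      rw [if_neg hcond, ih]
      ext y
      simp only [Set.mem_setOf_eq]
      constructor
      · rintro ⟨h1, h2⟩; exact ⟨h1, by omega⟩
      · rintro ⟨h1, h2⟩
        refine ⟨h1, ?_⟩
        rcases Nat.lt_or_ge y (m + 1) with h3 | h3
        · omega
        · have : y = m + 1 := by omega
          exact absurd (this ▸ h1) (by simpa using h)
lemma stanleySeq_char {p : ℕ} (hp : p.Prime) :
    StanleySeq p ({0} : Set ℕ) = {x | NoDig p x} := by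
  ext x
  simp only [StanleySeq, Set.mem_setOf_eq, stanleyUpTo_char hp, le_refl, and_true]

/-- For `p > 3` prime, `p^{k-2} < n ≤ p^{k-1}` with
`p^{k-1} - n ∈ S_p(0)` and `p^{k-1} - n < (p-2)p^{k-2}`, the set
`A = ({0} ∪ (n + S_p^k)) \ {(p-1)p^{k-1}}` is `p`-free mod `p^k`. -/
theorem modular_set_pfree (p n k : ℕ) (hp : p.Prime) (hp3 : 3 < p)
    (hk : 2 ≤ k) (hn1 : p ^ (k - 2) < n) (hn2 : n ≤ p ^ (k - 1))
    (hn3 : p ^ (k - 1) - n ∈ StanleySeq p {0})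
    (hn4 : p ^ (k - 1) - n < (p - 2) * p ^ (k - 2)) :
    IsPFreeMod p (p ^ k)
      (({0} ∪ (fun s => n + s) '' {x | x ∈ StanleySeq p {0} ∧ x < p ^ k}) \
        {(p - 1) * p ^ (k - 1)}) := by

  haveI := Fact.mk hp
  have hp2 := hp.two_le
  haveI : NeZero (p ^ k) := ⟨(pow_pos hp.pos k).ne'⟩
  set N := p ^ k with hN
  set K1 := p ^ (k - 1) with hK1
  have hK1pos : 0 < K1 := pow_pos hp.pos _
  have hNpos : 0 < N := pow_pos hp.pos _
  have hpK1 : p * K1 = N := by rw [hK1, hN, ← pow_succ']; congr 1; omega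
  have hK1N : K1 ≤ N := by nlinarith
  have hK1dvdN : K1 ∣ N := ⟨p, by rw [mul_comm]; exact hpK1.symm⟩
  have hn0 : 1 ≤ n := le_trans (pow_pos hp.pos _) (le_of_lt hn1)
  set r := K1 - n with hr
  have hrD : NoDig p r := by rwa [stanleySeq_char hp] at hn3
  have hrK1 : r < K1 := by omega
  -- arithmetic identities
  have e1 : (p - 1) * K1 = (p - 2) * K1 + K1 := by
    rw [show p - 1 = (p - 2) + 1 by omega, Nat.succ_mul]
  have e2 : (p - 1) * K1 + K1 = N := by
    rw [Nat.sub_one_mul, ← hpK1]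
    have : K1 ≤ p * K1 := Nat.le_mul_of_pos_left _ hp.pos
    omega
  have hNn : N - n = (p - 1) * K1 + r := by omega
  rintro ⟨a, d, hd0, h⟩
  set b : ZMod N := a - (n : ℕ) with hb
  -- classification of the AP terms
  have hics : ∀ i : ℕ, i < p →
      (∃ s : ℕ, NoDig p s ∧ s < N ∧ n + s ≠ (p - 1) * K1 ∧ b + (i : ZMod N) * d = (s : ZMod N))
      ∨ b + (i : ZMod N) * d = ((N - n : ℕ) : ZMod N) := by
    intro i hi
    obtain ⟨x, hxA, hxe⟩ := h i hi
    obtain ⟨hx1, hx2⟩ := hxA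
    simp only [Set.mem_singleton_iff] at hx2
    rcases hx1 with hx0 | ⟨s, hs, hsx⟩
    · right
      simp only [Set.mem_singleton_iff] at hx0
      subst hx0
      have hnN : n ≤ N := le_trans hn2 hK1N
      have hNn' : ((N - n : ℕ) : ZMod N) = - (n : ℕ) := by
        rw [Nat.cast_sub hnN]
        simp
      have h0 : a + (i : ZMod N) * d = 0 := by rw [← hxe]; simp
      rw [hNn', hb]
      linear_combination h0
    · left
      have hsx' : n + s = x := hsx
      rw [stanleySeq_char hp] at hs
      refine ⟨s, hs.1, hs.2, by rw [← hsx'] at hx2; exact hx2, ?_⟩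
      have hxe' : ((n + s : ℕ) : ZMod N) = a + (i : ZMod N) * d := by rw [hsx']; exact hxe
      rw [hb]
      push_cast at hxe'
      linear_combination -hxe' 
  
  -- decompose the lift of d
  obtain ⟨j, e, hje, hpe, hjk⟩ : ∃ j e, p ^ j * e = d.val ∧ ¬ p ∣ e ∧ j < k := by
    have hdv0 : 0 < d.val := by
      rcases Nat.eq_zero_or_pos d.val with h0 | h0
      · exact absurd ((ZMod.val_eq_zero d).mp h0) hd0
      · exact h0
    refine ⟨d.val.factorization p, d.val / p ^ (d.val.factorization p),
      Nat.ordProj_mul_ordCompl_eq_self d.val p, Nat.not_dvd_ordCompl hp hdv0.ne', ?_⟩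
    have h1 : p ^ (d.val.factorization p) ≤ d.val :=
      Nat.le_of_dvd hdv0 (Nat.ordProj_dvd _ _)
    have h2 : d.val < p ^ k := hN ▸ ZMod.val_lt d
    exact (Nat.pow_lt_pow_iff_right hp.one_lt).mp (lt_of_le_of_lt h1 h2)
  have hval : ∀ i : ℕ, (b + (i : ZMod N) * d).val = (b.val + i * d.val) % N := by
    intro i
    have : b + (i : ZMod N) * d = ((b.val + i * d.val : ℕ) : ZMod N) := by
      push_cast
      rw [ZMod.natCast_val, ZMod.natCast_val, ZMod.cast_id, ZMod.cast_id]
    rw [this, ZMod.val_natCast]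
  have hdig : ∀ t, t < p → ∃ i, i < p ∧ (b + (i : ZMod N) * d).val / p ^ j % p = t := by
    intro t ht
    obtain ⟨i, hip, hi⟩ := exists_digit p hp b.val e j t hpe ht
    refine ⟨i, hip, ?_⟩
    rw [hval i, ← hje]
    exact (digit_mod_pow hjk).trans hi
  have hNnval : ((N - n : ℕ) : ZMod N).val = N - n := by
    rw [ZMod.val_natCast, Nat.mod_eq_of_lt (by omega)]
  have hmod : (N - n) % K1 = r := by
    rw [hNn, mul_comm, Nat.mul_add_mod]
    exact Nat.mod_eq_of_lt hrK1
  -- first application of the digit lemma: target digit p - 1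
  obtain ⟨i₁, hi₁p, hi₁⟩ := hdig (p - 1) (by omega)
  have hi1eq : b + (i₁ : ZMod N) * d = ((N - n : ℕ) : ZMod N) := by
    rcases hics i₁ hi₁p with ⟨s, hsD, hsN, hsne, hseq⟩ | hc2
    · exfalso
      have hv : (b + (i₁ : ZMod N) * d).val = s := by
        rw [hseq, ZMod.val_natCast, Nat.mod_eq_of_lt hsN]
      rw [hv] at hi₁
      exact hsD j hi₁
    · exact hc2
  have hdNn : (N - n) / p ^ j % p = p - 1 := by
    rw [← hNnval, ← hi1eq]
    exact hi₁
  -- deduce j = k - 1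
  have hjk1 : j = k - 1 := by
    by_contra hne
    have hjk2 : j < k - 1 := by omega
    have h1 : ((N - n) % p ^ (k - 1)) / p ^ j % p = (N - n) / p ^ j % p :=
      digit_mod_pow hjk2
    rw [← hK1, hmod] at h1
    rw [← h1] at hdNn
    exact hrD j hdNn
  subst hjk1
  rw [← hK1] at hje
  -- the lower part of b is r
  have hvNn : (b.val + i₁ * d.val) % N = N - n := by
    rw [← hval, hi1eq, hNnval]
  have hlow : ∀ i : ℕ, (b.val + i * d.val) % K1 = b.val % K1 := by
    intro i
    rw [← hje, show i * (K1 * e) = i * e * K1 by ring, Nat.add_mul_mod_self_right]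
  have hbvr : b.val % K1 = r := by
    have h1 : ((b.val + i₁ * d.val) % N) % K1 = (b.val + i₁ * d.val) % K1 :=
      Nat.mod_mod_of_dvd _ hK1dvdN
    rw [hvNn, hmod, hlow] at h1
    exact h1.symm
  -- second application of the digit lemma: target digit p - 2
  obtain ⟨i₂, hi₂p, hi₂⟩ := hdig (p - 2) (by omega)
  rw [hval i₂, ← hK1] at hi₂
  have hlt : ((b.val + i₂ * d.val) % N) / K1 < p := by
    rw [Nat.div_lt_iff_lt_mul hK1pos]
    calc (b.val + i₂ * d.val) % N < N := Nat.mod_lt _ hNpos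
      _ = p * K1 := hpK1.symm
  rw [Nat.mod_eq_of_lt hlt] at hi₂
  have hXval : (b.val + i₂ * d.val) % N = (p - 2) * K1 + r := by
    have hdm := Nat.div_add_mod ((b.val + i₂ * d.val) % N) K1
    have hm : ((b.val + i₂ * d.val) % N) % K1 = r := by
      rw [Nat.mod_mod_of_dvd _ hK1dvdN, hlow, hbvr]
    rw [hi₂, hm, mul_comm] at hdm
    omega
  rcases hics i₂ hi₂p with ⟨s, hsD, hsN, hsne, hseq⟩ | hc2
  · have hs : s = (p - 2) * K1 + r := by
      rw [← hXval, ← hval i₂, hseq, ZMod.val_natCast, Nat.mod_eq_of_lt hsN]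
    exact hsne (by rw [hs]; omega)
  · have hX2 : (b.val + i₂ * d.val) % N = N - n := by
      rw [← hval i₂, hc2, hNnval]
    rw [hXval] at hX2
    omega
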